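/- Consider the linear time-varying system ė_x = −k_x e_x + ω_d(t) e_y, ė_y = −ω_d(t) e_x, with k_x > 0, ω_d continuously differentiable, |ω_d| ≤ ω̄, |ω_d'| ≤ ω̄, and ω_d persistently exciting with parameters μ, T. Let W₁(t,e) := (1/2)(Υ(t)+α)|e|² − ω_d(t) e_x e_y with Υ(t) := 1 + 2ω̄²T − (2/T)∫_t^{t+T}∫_t^m ω_d² and α ≥ max{ω̄, (2ω̄²/k_x)(1 + (T/(4μ))(1+k_x)²)}. Then along any solution, d/dt W₁(t, e(t)) ≤ −(μ/(2T))|e(t)|². -/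

import Mathlib

open MeasureTheory intervalIntegral

private lemma W1_aux (kx ωbar μ T α w w' P u x y : ℝ)
    (hkx : 0 < kx) (hT : 0 < T) (hμ : 0 < μ)
    (hwabs : |w| ≤ ωbar) (hw'abs : |w'| ≤ ωbar)
    (hP : μ ≤ P) (hu : 0 ≤ u)
    (hα2 : (2 * ωbar ^ 2 / kx) * (1 + (T / (4 * μ)) * (1 + kx) ^ 2) ≤ α) :
    (1 / 2) * ((-(2 / T * (P - T * w ^ 2))) * (x ^ 2 + y ^ 2)
        + (u + α) * (2 * x * (-kx * x + w * y) + 2 * y * (-w * x)))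
      - (w' * x * y + w * ((-kx * x + w * y) * y + x * (-w * x)))
      ≤ -(μ / (2 * T)) * (x ^ 2 + y ^ 2) := by
  have hwb : w ^ 2 ≤ ωbar ^ 2 := by
    have h := abs_le.mp hwabs; nlinarith [h.1, h.2]
  have hw'b : w' ^ 2 ≤ ωbar ^ 2 := by
    have h := abs_le.mp hw'abs; nlinarith [h.1, h.2]
  have hωb : 0 ≤ ωbar := le_trans (abs_nonneg _) hwabs
  have h6 : 8 * μ * ωbar ^ 2 + 2 * ωbar ^ 2 * T * (1 + kx) ^ 2 ≤ 4 * μ * kx * α := by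
    have h := mul_le_mul_of_nonneg_left hα2 (show (0:ℝ) ≤ 4 * μ * kx by positivity)
    have heq : 4 * μ * kx * ((2 * ωbar ^ 2 / kx) * (1 + (T / (4 * μ)) * (1 + kx) ^ 2))
        = 8 * μ * ωbar ^ 2 + 2 * ωbar ^ 2 * T * (1 + kx) ^ 2 := by
      field_simp
      ring
    rw [heq] at h
    linarith
  have ha2 : (kx * w - w') ^ 2 ≤ (1 + kx) ^ 2 * ωbar ^ 2 := by
    have h1 := abs_le.mp hwabs
    have h2 := abs_le.mp hw'abs
    nlinarith [h1.1, h1.2, h2.1, h2.2, mul_pos hkx hkx,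
      mul_le_mul_of_nonneg_left h1.2 (le_of_lt hkx),
      mul_le_mul_of_nonneg_left (neg_le_of_neg_le h1.1) (le_of_lt hkx)]
  set d : ℝ := (1 / 2) * ((-(2 / T * (P - T * w ^ 2))) * (x ^ 2 + y ^ 2)
        + (u + α) * (2 * x * (-kx * x + w * y) + 2 * y * (-w * x)))
      - (w' * x * y + w * ((-kx * x + w * y) * y + x * (-w * x))) with hd
  have hTne : (T:ℝ) ≠ 0 := ne_of_gt hT
  have hpos : (0:ℝ) < 2 * T * μ := by positivity
  have hmain : 2 * T * μ * (d + (μ / (2 * T)) * (x ^ 2 + y ^ 2)) ≤ 0 := by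
    have hexp : 2 * T * μ * (d + (μ / (2 * T)) * (x ^ 2 + y ^ 2))
        = 2 * T * μ * (2 * w ^ 2 * x ^ 2 + (kx * w - w') * x * y - kx * (u + α) * x ^ 2)
          - 2 * μ * P * (x ^ 2 + y ^ 2) + μ ^ 2 * (x ^ 2 + y ^ 2) := by
      rw [hd]
      field_simp
      ring
    rw [hexp]
    have hA1 : 2 * T * μ * ((kx * w - w') * x * y)
        ≤ (1 + kx) ^ 2 * ωbar ^ 2 * T ^ 2 * x ^ 2 + μ ^ 2 * y ^ 2 := by
      linarith [sq_nonneg ((kx * w - w') * T * x - μ * y),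
        mul_le_mul_of_nonneg_right ha2 (mul_nonneg (sq_nonneg T) (sq_nonneg x))]
    have hA2 : 2 * T * μ * (2 * w ^ 2 * x ^ 2) ≤ 4 * T * μ * ωbar ^ 2 * x ^ 2 := by
      have h := mul_le_mul_of_nonneg_left
        (mul_le_mul_of_nonneg_right hwb (sq_nonneg x))
        (show (0:ℝ) ≤ 4 * T * μ by positivity)
      linarith [h]
    have hA3 : 4 * T * μ * ωbar ^ 2 * x ^ 2 + ωbar ^ 2 * T ^ 2 * (1 + kx) ^ 2 * x ^ 2
        ≤ 2 * T * μ * kx * α * x ^ 2 := by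
      have h := mul_le_mul_of_nonneg_right h6
        (mul_nonneg (le_of_lt (half_pos hT)) (sq_nonneg x))
      linarith [h]
    have hA4 : 2 * μ * μ * (x ^ 2 + y ^ 2) ≤ 2 * μ * P * (x ^ 2 + y ^ 2) := by
      have h := mul_le_mul_of_nonneg_left hP
        (show (0:ℝ) ≤ 2 * μ * (x ^ 2 + y ^ 2) by positivity)
      linarith [h]
    have hA5 : 0 ≤ 2 * T * μ * kx * u * x ^ 2 := by positivity
    linarith [hA1, hA2, hA3, hA4, hA5, sq_nonneg (μ * x)]
  have hfin := (mul_le_mul_iff_right₀ hpos).mp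
    (by linarith : 2 * T * μ * (d + (μ / (2 * T)) * (x ^ 2 + y ^ 2)) ≤ 2 * T * μ * 0)
  linarith [hfin]

theorem W1_strict_lyapunov
    (ωd : ℝ → ℝ) (kx ωbar μ T α : ℝ)
    (hkx : 0 < kx) (hT : 0 < T) (hμ : 0 < μ)
    (hC1 : ContDiff ℝ 1 ωd)
    (hωd : ∀ t : ℝ, |ωd t| ≤ ωbar)
    (hωd' : ∀ t : ℝ, |deriv ωd t| ≤ ωbar)
    (hPE : ∀ t : ℝ, 0 ≤ t → μ ≤ ∫ s in t..(t + T), (ωd s) ^ 2)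
    (hα : max ωbar ((2 * ωbar ^ 2 / kx) * (1 + (T / (4 * μ)) * (1 + kx) ^ 2)) ≤ α)
    (Υ : ℝ → ℝ)
    (hΥ : ∀ t : ℝ, Υ t = 1 + 2 * ωbar ^ 2 * T -
      (2 / T) * ∫ m in t..(t + T), (∫ s in t..m, (ωd s) ^ 2))
    (W₁ : ℝ → ℝ → ℝ → ℝ)
    (hW₁ : ∀ t ex ey : ℝ,
      W₁ t ex ey = (1 / 2) * (Υ t + α) * (ex ^ 2 + ey ^ 2) - ωd t * ex * ey)
    (ex ey : ℝ → ℝ)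
    (hex : ∀ t : ℝ, HasDerivAt ex (-kx * ex t + ωd t * ey t) t)
    (hey : ∀ t : ℝ, HasDerivAt ey (-(ωd t) * ex t) t) :
    ∀ t : ℝ, 0 ≤ t → ∃ d : ℝ,
      HasDerivAt (fun s => W₁ s (ex s) (ey s)) d t ∧
      d ≤ -(μ / (2 * T)) * ((ex t) ^ 2 + (ey t) ^ 2) := by
  intro t ht
  have hωc : Continuous ωd := hC1.continuous
  have hfc : Continuous (fun s : ℝ => (ωd s) ^ 2) := hωc.pow 2
  have hfi : ∀ a b : ℝ, IntervalIntegrable (fun s : ℝ => (ωd s) ^ 2) volume a b :=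
    fun a b => hfc.intervalIntegrable a b
  set Φ : ℝ → ℝ := fun x => ∫ s in (0:ℝ)..x, (ωd s) ^ 2 with hΦdef
  have hΦd : ∀ x : ℝ, HasDerivAt Φ ((ωd x) ^ 2) x := fun x =>
    intervalIntegral.integral_hasDerivAt_right (hfi 0 x)
      (hfc.aestronglyMeasurable.stronglyMeasurableAtFilter) hfc.continuousAt
  have hΦdiff : Differentiable ℝ Φ := fun x => (hΦd x).differentiableAt
  have hΦc : Continuous Φ := hΦdiff.continuous
  have hΦi : ∀ a b : ℝ, IntervalIntegrable Φ volume a b :=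
    fun a b => hΦc.intervalIntegrable a b
  set Ψ : ℝ → ℝ := fun x => ∫ m in (0:ℝ)..x, Φ m with hΨdef
  have hΨd : ∀ x : ℝ, HasDerivAt Ψ (Φ x) x := fun x =>
    intervalIntegral.integral_hasDerivAt_right (hΦi 0 x)
      (hΦc.aestronglyMeasurable.stronglyMeasurableAtFilter) hΦc.continuousAt
  have hsub : ∀ u m : ℝ, (∫ s in u..m, (ωd s) ^ 2) = Φ m - Φ u := fun u m =>
    (intervalIntegral.integral_interval_sub_left (hfi 0 m) (hfi 0 u)).symm
  have key : ∀ u : ℝ, (∫ m in u..(u + T), (∫ s in u..m, (ωd s) ^ 2))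
      = (Ψ (u + T) - Ψ u) - T * Φ u := by
    intro u
    have h1 : (∫ m in u..(u + T), (∫ s in u..m, (ωd s) ^ 2))
        = ∫ m in u..(u + T), (Φ m - Φ u) := by
      apply intervalIntegral.integral_congr
      intro m _
      exact hsub u m
    rw [h1, intervalIntegral.integral_sub (hΦi u (u + T)) (intervalIntegrable_const),
      intervalIntegral.integral_const,
      intervalIntegral.integral_interval_sub_left (hΦi 0 (u + T)) (hΦi 0 u)]
    simp [smul_eq_mul]
  have hΥfun : Υ = fun u => 1 + 2 * ωbar ^ 2 * T -
      (2 / T) * ((Ψ (u + T) - Ψ u) - T * Φ u) := by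
    funext u
    rw [hΥ u, key u]
  -- derivative of Υ at t
  have hΨT : HasDerivAt (fun u : ℝ => Ψ (u + T)) (Φ (t + T)) t := by
    have h := (hΨd (t + T)).comp t ((hasDerivAt_id t).add_const T)
    exact (hΨd (t + T)).comp_add_const t T
  have hg : HasDerivAt (fun u : ℝ => (Ψ (u + T) - Ψ u) - T * Φ u)
      ((Φ (t + T) - Φ t) - T * (ωd t) ^ 2) t :=
    (hΨT.sub (hΨd t)).sub ((hΦd t).const_mul T)
  have hΥd : HasDerivAt Υ (-(2 / T * ((Φ (t + T) - Φ t) - T * (ωd t) ^ 2))) t := by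
    rw [hΥfun]
    exact (hg.const_mul (2 / T)).const_sub (1 + 2 * ωbar ^ 2 * T)
  -- abbreviations
  set x := ex t with hx
  set y := ey t with hy
  set w := ωd t with hw
  set w' := deriv ωd t with hw'
  set P := Φ (t + T) - Φ t with hP
  set u := Υ t with hu
  have hωdd : HasDerivAt ωd w' t := (hC1.differentiable one_ne_zero t).hasDerivAt
  -- derivative of W₁ along the trajectory
  have hWfun : (fun s => W₁ s (ex s) (ey s)) =
      fun s => (1 / 2) * (Υ s + α) * ((ex s) ^ 2 + (ey s) ^ 2) - ωd s * ex s * ey s := by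
    funext s
    exact hW₁ s (ex s) (ey s)
  have hsq : HasDerivAt (fun s => (ex s) ^ 2 + (ey s) ^ 2)
      (2 * x * (-kx * x + w * y) + 2 * y * (-w * x)) t := by
    have h := ((hex t).fun_pow 2).fun_add ((hey t).fun_pow 2)
    refine h.congr_deriv ?_
    push_cast
    ring
  have hA : HasDerivAt (fun s => (1 / 2) * (Υ s + α) * ((ex s) ^ 2 + (ey s) ^ 2))
      ((1 / 2) * ((-(2 / T * (P - T * w ^ 2))) * (x ^ 2 + y ^ 2)
        + (u + α) * (2 * x * (-kx * x + w * y) + 2 * y * (-w * x)))) t := by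
    have h := (((hΥd.add_const α).fun_mul hsq).const_mul (1 / 2 : ℝ))
    have heq : (fun s => (1 / 2 : ℝ) * ((Υ s + α) * ((ex s) ^ 2 + (ey s) ^ 2)))
        = fun s => (1 / 2) * (Υ s + α) * ((ex s) ^ 2 + (ey s) ^ 2) := by
      funext s; ring
    rw [heq] at h
    convert h using 1
  have hB : HasDerivAt (fun s => ωd s * ex s * ey s)
      (w' * x * y + w * ((-kx * x + w * y) * y + x * (-w * x))) t := by
    have h := ((hωdd.fun_mul (hex t)).fun_mul (hey t))
    refine h.congr_deriv ?_
    ring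
  refine ⟨_, by rw [hWfun]; exact hA.sub hB, ?_⟩
  -- facts needed by the auxiliary lemma
  have hPE' : μ ≤ P := by
    rw [hP, ← hsub t (t + T)]
    exact hPE t ht
  have hωb : 0 ≤ ωbar := le_trans (abs_nonneg _) (hωd t)
  have hfb : ∀ s : ℝ, (ωd s) ^ 2 ≤ ωbar ^ 2 := by
    intro s
    have h := abs_le.mp (hωd s)
    nlinarith [h.1, h.2]
  have hDle : (∫ m in t..(t + T), (∫ s in t..m, (ωd s) ^ 2)) ≤ ωbar ^ 2 * T * T := by
    have hGint : IntervalIntegrable (fun m => ∫ s in t..m, (ωd s) ^ 2) volume t (t + T) := by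
      have h : (fun m => ∫ s in t..m, (ωd s) ^ 2) = fun m => Φ m - Φ t := funext (hsub t)
      rw [h]
      exact (hΦc.sub continuous_const).intervalIntegrable t (t + T)
    have hmono : ∀ m ∈ Set.Icc t (t + T), (∫ s in t..m, (ωd s) ^ 2) ≤ ωbar ^ 2 * T := by
      intro m hm
      have h1 : (∫ s in t..m, (ωd s) ^ 2) ≤ ∫ _ in t..m, ωbar ^ 2 :=
        intervalIntegral.integral_mono_on hm.1 (hfi t m) intervalIntegrable_const
          (fun s _ => hfb s)
      rw [intervalIntegral.integral_const, smul_eq_mul] at h1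
      have h2 : (m - t) * ωbar ^ 2 ≤ T * ωbar ^ 2 := by
        nlinarith [hm.2, sq_nonneg ωbar]
      nlinarith
    calc (∫ m in t..(t + T), (∫ s in t..m, (ωd s) ^ 2))
        ≤ ∫ _ in t..(t + T), ωbar ^ 2 * T :=
          intervalIntegral.integral_mono_on (by linarith) hGint intervalIntegrable_const hmono
      _ = T * (ωbar ^ 2 * T) := by
          rw [intervalIntegral.integral_const, smul_eq_mul]; ring_nf
      _ = ωbar ^ 2 * T * T := by ring
  have huge : 0 ≤ u := by
    rw [hu, hΥ t]
    have h1 : (2 / T) * (∫ m in t..(t + T), (∫ s in t..m, (ωd s) ^ 2))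
        ≤ (2 / T) * (ωbar ^ 2 * T * T) :=
      mul_le_mul_of_nonneg_left hDle (by positivity)
    have h2 : (2 / T) * (ωbar ^ 2 * T * T) = 2 * ωbar ^ 2 * T := by
      field_simp
    linarith
  have hα2 : (2 * ωbar ^ 2 / kx) * (1 + (T / (4 * μ)) * (1 + kx) ^ 2) ≤ α :=
    le_trans (le_max_right _ _) hα
  exact W1_aux kx ωbar μ T α w w' P u x y hkx hT hμ (hωd t) (hωd' t) hPE' huge hα2
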